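/- Let F be a nonempty closed convex subset of ℝⁿ, let c, c′ ∈ ℝⁿ, x ∈ F, δ > 0 and η > 0. Suppose x is a strong maximizer of ⟨c,·⟩ over F with modulus δ, i.e. ⟨c, x⟩ ≥ ⟨c, x′⟩ + δ‖x′ − x‖² for all x′ ∈ F, and suppose c′ − η c ∈ N_F(x). Then x is a strong maximizer of ⟨c′,·⟩ over F with modulus η δ, i.e. ⟨c′, x⟩ ≥ ⟨c′, x′⟩ + η δ ‖x′ − x‖² for all x′ ∈ F. -/

import Mathlib

/-- If `x` is a strong maximizer of `⟪c,·⟫` over the nonempty closed convex set `F`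
with modulus `δ`, and `c′ − η c` lies in the normal cone `N_F(x)`, then `x` is a
strong maximizer of `⟪c′,·⟫` over `F` with modulus `η δ`. -/
theorem strong_maximizer_normal_perturbation (n : ℕ)
    (F : Set (EuclideanSpace ℝ (Fin n)))
    (hne : F.Nonempty) (hcl : IsClosed F) (hconv : Convex ℝ F)
    (c c' : EuclideanSpace ℝ (Fin n)) (x : EuclideanSpace ℝ (Fin n)) (hx : x ∈ F)
    (δ η : ℝ) (hδ : 0 < δ) (hη : 0 < η)
    (hstrong : ∀ x' ∈ F, (inner ℝ c x' : ℝ) + δ * ‖x' - x‖ ^ 2 ≤ inner ℝ c x)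
    (hnc : ∀ x' ∈ F, (inner ℝ (c' - η • c) (x' - x) : ℝ) ≤ 0) :
    ∀ x' ∈ F, (inner ℝ c' x' : ℝ) + η * δ * ‖x' - x‖ ^ 2 ≤ inner ℝ c' x := by
  intro x' hx'
  have h1 := hstrong x' hx'
  have h2 := hnc x' hx'
  rw [inner_sub_left, inner_sub_right, inner_sub_right, real_inner_smul_left, real_inner_smul_left] at h2
  nlinarith [h2, mul_le_mul_of_nonneg_left h1 hη.le]
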